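/- Let C = C_L(P,G)^⊥ be the dual of an evaluation code, r = c + e a received word with c ∈ C, and let I be the support of the error e. Suppose spaces L(G') and L(G-G') of functions satisfy: (i) every product f·g with f ∈ L(G'), g ∈ L(G-G') lies in L(G); (ii) there exists a nonzero z ∈ L(G') vanishing at all points Pᵢ, i ∈ I; (iii) for each i₀ ∈ I there exists h ∈ L(G-G') with h(P_{i₀}) ≠ 0 and h(Pᵢ) = 0 for i ∈ I, i ≠ i₀. Then any nonzero solution f = Σⱼ aⱼ fⱼ of the syndrome equations Σⱼ [r, fⱼ gᵢ] aⱼ = 0 (for all basis elements gᵢ of L(G-G')) satisfies f(Pᵢ) = 0 for all i ∈ I, i.e., f is an error locator. -/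
import Mathlib


/-- Error-locator proposition: under the product, vanishing-function and
separating-function hypotheses, any nonzero solution `fa = ∑ⱼ aⱼ fⱼ` of the
syndrome equations vanishes at every error position. -/
theorem error_locator (F : Type) [Field F] [Fintype F]
    (n ℓ k : ℕ) (f : Fin ℓ → (Fin n → F)) (g : Fin k → (Fin n → F))
    (LG : Submodule F (Fin n → F))
    (hfli : LinearIndependent F f)
    (hprod : ∀ (j : Fin ℓ) (i : Fin k), (fun v => f j v * g i v) ∈ LG)
    (c e : Fin n → F)
    (hc : ∀ h ∈ LG, ∑ v, c v * h v = 0)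
    (hz : ∃ γ : Fin ℓ → F, (fun v => ∑ j, γ j * f j v) ≠ 0 ∧
      ∀ i, e i ≠ 0 → (∑ j, γ j * f j i) = 0)
    (hsep : ∀ i₀, e i₀ ≠ 0 → ∃ δ : Fin k → F,
      (∑ i, δ i * g i i₀) ≠ 0 ∧
      ∀ i, e i ≠ 0 → i ≠ i₀ → (∑ i', δ i' * g i' i) = 0)
    (a : Fin ℓ → F)
    (ha : ∀ i : Fin k, ∑ j, a j * (∑ v, (c v + e v) * (f j v * g i v)) = 0)
    (hanz : (fun v => ∑ j, a j * f j v) ≠ 0) :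
    ∀ i, e i ≠ 0 → (∑ j, a j * f j i) = 0 := by
  -- First: syndrome equations reduce to sums over the error vector alone.
  have hae : ∀ i : Fin k, ∑ j, a j * (∑ v, e v * (f j v * g i v)) = 0 := by
    intro i
    have h := ha i
    have hsplit : ∀ j : Fin ℓ,
        (∑ v, (c v + e v) * (f j v * g i v)) = ∑ v, e v * (f j v * g i v) := by
      intro j
      have hc0 : ∑ v, c v * (f j v * g i v) = 0 := hc _ (hprod j i)
      calc (∑ v, (c v + e v) * (f j v * g i v))
          = (∑ v, c v * (f j v * g i v)) + ∑ v, e v * (f j v * g i v) := by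
            rw [← Finset.sum_add_distrib]; congr 1; ext v; ring
        _ = ∑ v, e v * (f j v * g i v) := by rw [hc0, zero_add]
    simpa [hsplit] using h
  intro i₀ he0
  obtain ⟨δ, hδ0, hδ⟩ := hsep i₀ he0
  -- The key double sum
  have hS : ∑ v, e v * (∑ j, a j * f j v) * (∑ i, δ i * g i v) = 0 := by
    have : ∑ v, e v * (∑ j, a j * f j v) * (∑ i, δ i * g i v)
        = ∑ i, δ i * (∑ j, a j * (∑ v, e v * (f j v * g i v))) := by
      simp only [Finset.mul_sum, Finset.sum_mul]
      rw [Finset.sum_comm]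
      congr 1; ext i
      rw [Finset.sum_comm]
      congr 1; ext j
      congr 1; ext v
      ring
    rw [this]
    simp [hae]
  -- All terms vanish except v = i₀
  have hsingle : ∑ v, e v * (∑ j, a j * f j v) * (∑ i, δ i * g i v)
      = e i₀ * (∑ j, a j * f j i₀) * (∑ i, δ i * g i i₀) := by
    apply Finset.sum_eq_single
    · intro v _ hv
      by_cases hev : e v = 0
      · simp [hev]
      · rw [hδ v hev hv, mul_zero]
    · intro h; exact absurd (Finset.mem_univ i₀) h
  rw [hsingle] at hS
  rcases mul_eq_zero.mp hS with h | h
  · rcases mul_eq_zero.mp h with h | h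
    · exact absurd h he0
    · exact h
  · exact absurd h hδ0
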